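/- arXiv:1708.00715 — 2 statements merged into one kernel-verified Lean document; each statement's English description precedes it below -/
import Mathlib

section
/- For n ≥ 3 and x, y in the unit ball B^n with x ≠ y and z = φ_x(y) ≠ 0, one has |1/|x−y|^{n−2} − 1/[x,y]^{n−2}| = [x,z]^{n−2}(1 − |z|^{n−2}) / (|z|^{n−2}(1−|x|²)^{n−2}). -/
open Metric Classical

/-- `[x,y] = | y|x| - x/|x| |`, with the convention `[x,y] = 1` when `x = 0`. -/

noncomputable def br {n : ℕ} (x y : EuclideanSpace ℝ (Fin n)) : ℝ :=
  if x = 0 then 1 else ‖‖x‖ • y - ‖x‖⁻¹ • x‖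

/-- The Möbius transformation `φ_x(y) = (|x-y|² x - (1-|x|²)(y-x)) / [x,y]²`. -/
noncomputable def moebius {n : ℕ} (x y : EuclideanSpace ℝ (Fin n)) :
    EuclideanSpace ℝ (Fin n) :=
  ((br x y) ^ 2)⁻¹ • (‖x - y‖ ^ 2 • x - (1 - ‖x‖ ^ 2) • (y - x))

lemma br_sq {n : ℕ} (x y : EuclideanSpace ℝ (Fin n)) (hx : x ≠ 0) :
    (br x y)^2 = ‖x - y‖^2 + (1 - ‖x‖^2)*(1 - ‖y‖^2) := by
  have hx' : ‖x‖ ≠ 0 := norm_ne_zero_iff.mpr hx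
  rw [br, if_neg hx, norm_sub_sq_real, norm_sub_sq_real]
  rw [real_inner_smul_left, real_inner_smul_right, real_inner_comm y x]
  simp [norm_smul, abs_of_nonneg (norm_nonneg _)]
  field_simp
  ring

lemma smul_sub_smul_norm_sq {E : Type*} [NormedAddCommGroup E] [InnerProductSpace ℝ E]
    (x v : E) (a b : ℝ) :
    ‖a • x - b • v‖^2 = a^2*‖x‖^2 - 2*(a*b*inner ℝ x v) + b^2*‖v‖^2 := by
  rw [norm_sub_sq_real, norm_smul, norm_smul, real_inner_smul_left, real_inner_smul_right]
  simp [Real.norm_eq_abs, mul_pow, sq_abs]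
  ring

lemma w_norm_sq {n : ℕ} (x y : EuclideanSpace ℝ (Fin n)) (hx : x ≠ 0) :
    ‖‖x - y‖ ^ 2 • x - (1 - ‖x‖ ^ 2) • (y - x)‖^2 = ‖x - y‖^2 * (br x y)^2 := by
  rw [br_sq x y hx, smul_sub_smul_norm_sq, inner_sub_right, real_inner_self_eq_norm_sq,
    norm_sub_rev y x]
  have h1 : ‖x - y‖^2 = ‖x‖^2 - 2*inner ℝ x y + ‖y‖^2 := norm_sub_sq_real x y
  rw [h1]; ring

lemma key_algebra (s t p a c Z I : ℝ) (hc : c ≠ 0)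
    (h1 : a = s - 2*p + t) (hc2 : c^2 = a + (1-s)*(1-t))
    (hz2 : Z^2 * c^2 = a) (hI : I * c^2 = a*s - (1-s)*(p-s)) :
    ((s - 2*I + Z^2) + (1-s)*(1-Z^2)) * a = Z^2 * (1-s)^2 := by
  have h : (((s - 2*I + Z^2) + (1-s)*(1-Z^2)) * a) * c^2 = (Z^2 * (1-s)^2) * c^2 := by
    linear_combination (-2*a) * hI + (a - (1-s)*a - (1-s)^2) * hz2 + a * hc2 + a*(1-s) * h1
  exact mul_right_cancel₀ (pow_ne_zero 2 hc) h

theorem green_kernel_diff_eq {n : ℕ} (hn : 3 ≤ n) (x y : EuclideanSpace ℝ (Fin n))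
    (hx : ‖x‖ < 1) (hy : ‖y‖ < 1) (hxy : x ≠ y)
    (z : EuclideanSpace ℝ (Fin n)) (hz : z = moebius x y) (hz0 : z ≠ 0) :
    |1 / ‖x - y‖ ^ (n - 2) - 1 / (br x y) ^ (n - 2)| =
      (br x z) ^ (n - 2) * (1 - ‖z‖ ^ (n - 2)) /
        (‖z‖ ^ (n - 2) * (1 - ‖x‖ ^ 2) ^ (n - 2)) := by
  set m := n - 2 with hm
  have hm0 : m ≠ 0 := by omega
  have hd : (0:ℝ) < ‖x - y‖ := by
    rw [norm_pos_iff]; exact sub_ne_zero.mpr hxy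
  by_cases hx0 : x = 0
  · subst hx0
    have hbr1 : br (0 : EuclideanSpace ℝ (Fin n)) y = 1 := if_pos rfl
    have hzy : z = -y := by
      rw [hz, moebius, hbr1]
      simp
    have hbrz1 : br (0 : EuclideanSpace ℝ (Fin n)) z = 1 := if_pos rfl
    have hny : ‖(0 : EuclideanSpace ℝ (Fin n)) - y‖ = ‖y‖ := by simp
    have hnz : ‖z‖ = ‖y‖ := by rw [hzy, norm_neg]
    have hy0 : (0:ℝ) < ‖y‖ := by
      rw [norm_pos_iff]
      intro h
      exact hz0 (by rw [hzy, h, neg_zero])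
    have hym : ‖y‖^m ≤ 1 := pow_le_one₀ (norm_nonneg _) hy.le
    have hymp : (0:ℝ) < ‖y‖^m := pow_pos hy0 m
    rw [hbr1, hbrz1, hny, hnz]
    rw [abs_of_nonneg (by
      have h1 : 1/(1:ℝ)^m = 1 := by simp
      rw [h1]
      have h2 : (1:ℝ) ≤ 1/‖y‖^m := by
        rw [le_div_iff₀ hymp]; simpa using hym
      linarith)]
    simp only [norm_zero, one_pow]
    rw [show (0:ℝ)^2 = 0 by ring]
    field_simp
    simp
  · -- x ≠ 0
    have hbx : (0:ℝ) < 1 - ‖x‖^2 := by nlinarith [norm_nonneg x]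
    have hby : (0:ℝ) < 1 - ‖y‖^2 := by nlinarith [norm_nonneg y]
    have hc2 : (br x y)^2 = ‖x - y‖^2 + (1 - ‖x‖^2)*(1 - ‖y‖^2) := br_sq x y hx0
    have hcnn : (0:ℝ) ≤ br x y := by rw [br, if_neg hx0]; exact norm_nonneg _
    have hcpos : (0:ℝ) < br x y := by
      rcases lt_or_eq_of_le hcnn with h | h
      · exact h
      · exfalso
        have h2 : (0:ℝ) < (br x y)^2 := by nlinarith
        rw [← h] at h2; simp at h2
    have hcne : br x y ≠ 0 := ne_of_gt hcpos
    have hdc : ‖x - y‖ < br x y := by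
      have : ‖x - y‖^2 < (br x y)^2 := by nlinarith
      exact lt_of_pow_lt_pow_left₀ 2 hcpos.le this
    have hz2 : ‖z‖^2 * (br x y)^2 = ‖x - y‖^2 := by
      rw [hz, moebius, norm_smul]
      have hn1 : ‖((br x y ^ 2)⁻¹ : ℝ)‖ = ((br x y)^2)⁻¹ := by
        rw [Real.norm_eq_abs, abs_inv, abs_of_nonneg (sq_nonneg _)]
      rw [hn1, mul_pow, w_norm_sq x y hx0]
      field_simp
    have hB : ‖z‖ * br x y = ‖x - y‖ := by
      have h1 : (‖z‖ * br x y)^2 = ‖x - y‖^2 := by rw [mul_pow]; exact hz2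
      have h2 : (0:ℝ) ≤ ‖z‖ * br x y := mul_nonneg (norm_nonneg _) hcpos.le
      exact (pow_left_inj₀ h2 (norm_nonneg _) two_ne_zero).mp h1
    have hzpos : (0:ℝ) < ‖z‖ := norm_pos_iff.mpr hz0
    have hzlt : ‖z‖ < 1 := by nlinarith [hB, hdc, hcpos]
    have hinner : inner ℝ x z * (br x y)^2 =
        ‖x - y‖^2 * ‖x‖^2 - (1 - ‖x‖^2) * (inner ℝ x y - ‖x‖^2) := by
      rw [hz, moebius, real_inner_smul_right, inner_sub_right, real_inner_smul_right,
        real_inner_smul_right, inner_sub_right, real_inner_self_eq_norm_sq]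
      field_simp
    have hC2 : (br x z)^2 * ‖x - y‖^2 = ‖z‖^2 * (1 - ‖x‖^2)^2 := by
      rw [br_sq x z hx0, norm_sub_sq_real x z]
      exact key_algebra (‖x‖^2) (‖y‖^2) (inner ℝ x y) (‖x - y‖^2) (br x y) ‖z‖ (inner ℝ x z)
        hcne (norm_sub_sq_real x y) hc2 hz2 hinner
    have hbrznn : (0:ℝ) ≤ br x z := by rw [br, if_neg hx0]; exact norm_nonneg _
    have hbrzpos : (0:ℝ) < br x z := by
      rcases lt_or_eq_of_le hbrznn with h | h
      · exact h
      · exfalso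
        have h2 : (0:ℝ) < (br x z)^2 := by
          have : (0:ℝ) < ‖z‖^2 * (1 - ‖x‖^2)^2 := by positivity
          have h3 : (0:ℝ) < ‖x - y‖^2 := by positivity
          nlinarith
        rw [← h] at h2; simp at h2
    have hC : br x z * ‖x - y‖ = ‖z‖ * (1 - ‖x‖^2) := by
      have h1 : (br x z * ‖x - y‖)^2 = (‖z‖ * (1 - ‖x‖^2))^2 := by
        rw [mul_pow, mul_pow]; exact hC2
      have h2 : (0:ℝ) ≤ br x z * ‖x - y‖ := mul_nonneg hbrznn hd.le
      have h3 : (0:ℝ) ≤ ‖z‖ * (1 - ‖x‖^2) := mul_nonneg hzpos.le hbx.le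
      exact (pow_left_inj₀ h2 h3 two_ne_zero).mp h1
    -- now the final computation with m-th powers
    have hBm : ‖z‖^m * (br x y)^m = ‖x - y‖^m := by rw [← mul_pow, hB]
    have hCm : (br x z)^m * ‖x - y‖^m = ‖z‖^m * (1 - ‖x‖^2)^m := by
      rw [← mul_pow, ← mul_pow, hC]
    have hdm : (0:ℝ) < ‖x - y‖^m := pow_pos hd m
    have hcm : (0:ℝ) < (br x y)^m := pow_pos hcpos m
    have hzm : (0:ℝ) < ‖z‖^m := pow_pos hzpos m
    have hbm : (0:ℝ) < (1 - ‖x‖^2)^m := pow_pos hbx m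
    have hlt : ‖x - y‖^m < (br x y)^m :=
      pow_lt_pow_left₀ hdc hd.le hm0
    rw [abs_of_nonneg (by
      have h1 := one_div_le_one_div_of_le hdm hlt.le
      linarith)]
    have key2 : (br x z)^m * (1-‖z‖^m) / (‖z‖^m * (1-‖x‖^2)^m) = (1-‖z‖^m)/‖x-y‖^m := by
      rw [div_eq_div_iff (by positivity) hdm.ne']
      linear_combination (1-‖z‖^m) * hCm
    rw [key2, div_sub_div _ _ hdm.ne' hcm.ne', div_eq_div_iff (by positivity) hdm.ne']
    linear_combination (‖x - y‖^m) * hBm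
end

section
/- For k ∈ {1,2,…}, define f_k : B^n → R^n (n ≥ 3) by f_k(x) = (k x₁, x₂/k, x₃, …, x_{n−1}, |x|²/3 + x_n). Then each f_k satisfies Δf_k = (0, …, 0, 2n/3), f_k(0) = 0, J_{f_k}(0) = 1, f_k is injective on B^n, and the image f_k(B^n) contains no ball of radius greater than 1/k. -/
open Metric

/-- The (componentwise) Laplacian of `f`, as the sum of the second derivatives in the
coordinate directions. -/
noncomputable def lap {n : ℕ} {F : Type*} [NormedAddCommGroup F] [NormedSpace ℝ F]
    (f : EuclideanSpace ℝ (Fin n) → F) (x : EuclideanSpace ℝ (Fin n)) : F :=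
  ∑ i : Fin n, fderiv ℝ (fun y => fderiv ℝ f y (EuclideanSpace.single i 1)) x
    (EuclideanSpace.single i 1)


section Aux
variable {n : ℕ}

noncomputable def diagCLM (d : Fin n → ℝ) :
    EuclideanSpace ℝ (Fin n) →L[ℝ] EuclideanSpace ℝ (Fin n) :=
  LinearMap.toContinuousLinearMap
    { toFun := fun x => (WithLp.equiv 2 (Fin n → ℝ)).symm fun i => d i * x i
      map_add' := fun x y => by
        ext i
        simp [mul_add]
      map_smul' := fun c x => by
        ext i
        simp
        ring }

@[simp] lemma diagCLM_apply (d : Fin n → ℝ) (x : EuclideanSpace ℝ (Fin n)) (i : Fin n) :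
    diagCLM d x i = d i * x i := rfl

lemma diagCLM_det (d : Fin n → ℝ) :
    LinearMap.det (diagCLM d : EuclideanSpace ℝ (Fin n) →ₗ[ℝ] EuclideanSpace ℝ (Fin n))
      = ∏ i, d i := by
  classical
  let B := (EuclideanSpace.basisFun (Fin n) ℝ).toBasis
  rw [← LinearMap.det_toMatrix B]
  have : LinearMap.toMatrix B B (diagCLM d : EuclideanSpace ℝ (Fin n) →ₗ[ℝ] _)
      = Matrix.diagonal d := by
    ext i j
    rw [LinearMap.toMatrix_apply]
    simp [B, Matrix.diagonal, EuclideanSpace.single_apply]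
  rw [this, Matrix.det_diagonal]

lemma hasFDerivAt_quad (L : EuclideanSpace ℝ (Fin n) →L[ℝ] EuclideanSpace ℝ (Fin n))
    (u : EuclideanSpace ℝ (Fin n)) (c : ℝ) (y : EuclideanSpace ℝ (Fin n)) :
    HasFDerivAt (fun x : EuclideanSpace ℝ (Fin n) => L x + (c * ‖x‖ ^ 2) • u)
      (L + (c • (2 • innerSL ℝ y)).smulRight u) y :=
  L.hasFDerivAt.add ((((hasStrictFDerivAt_norm_sq y).hasFDerivAt).const_mul c).smul_const u)

lemma lap_quad (L : EuclideanSpace ℝ (Fin n) →L[ℝ] EuclideanSpace ℝ (Fin n))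
    (u : EuclideanSpace ℝ (Fin n)) (c : ℝ) (x : EuclideanSpace ℝ (Fin n)) :
    lap (fun x : EuclideanSpace ℝ (Fin n) => L x + (c * ‖x‖ ^ 2) • u) x
      = ((2 * c * n) : ℝ) • u := by
  have key : ∀ i : Fin n,
      fderiv ℝ (fun y => fderiv ℝ
          (fun x : EuclideanSpace ℝ (Fin n) => L x + (c * ‖x‖ ^ 2) • u) y
          (EuclideanSpace.single i 1)) x (EuclideanSpace.single i 1) = (2 * c) • u := by
    intro i
    have heq : (fun y => fderiv ℝ
        (fun x : EuclideanSpace ℝ (Fin n) => L x + (c * ‖x‖ ^ 2) • u) y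
        (EuclideanSpace.single i 1))
        = fun y => L (EuclideanSpace.single i 1) +
            ((c • (2 • innerSL ℝ (EuclideanSpace.single i 1))).smulRight u) y := by
      funext y
      rw [(hasFDerivAt_quad L u c y).fderiv]
      simp [real_inner_comm]
    rw [heq]
    rw [(((c • (2 • innerSL ℝ (EuclideanSpace.single i 1))).smulRight
        u).hasFDerivAt.const_add (L (EuclideanSpace.single i 1))).fderiv]
    have : (inner ℝ (EuclideanSpace.single i (1:ℝ)) (EuclideanSpace.single i (1:ℝ)) : ℝ) = 1 := by
      rw [EuclideanSpace.inner_single_left]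
      simp [EuclideanSpace.single_apply]
    simp [this]
    module
  unfold lap
  rw [Finset.sum_congr rfl fun i _ => key i]
  rw [Finset.sum_const, Finset.card_univ, Fintype.card_fin, ← Nat.cast_smul_eq_nsmul ℝ,
    smul_smul]
  ring_nf

end Aux

lemma abs_coord_le_norm {n : ℕ} (x : EuclideanSpace ℝ (Fin n)) (i : Fin n) : |x i| ≤ ‖x‖ := by
  have h := abs_real_inner_le_norm (EuclideanSpace.single i (1:ℝ)) x
  simpa [EuclideanSpace.inner_single_left, EuclideanSpace.norm_single] using h

lemma norm_sq_eq_sum {n : ℕ} (x : EuclideanSpace ℝ (Fin n)) : ‖x‖ ^ 2 = ∑ i, x i ^ 2 := by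
  rw [EuclideanSpace.norm_eq, Real.sq_sqrt (by positivity)]
  simp [sq_abs]

set_option maxHeartbeats 1000000 in
set_option synthInstance.maxHeartbeats 400000 in
theorem no_landau_theorem_counterexample (n : ℕ) (hn : 3 ≤ n) (k : ℕ) (hk : 1 ≤ k)
    (f : EuclideanSpace ℝ (Fin n) → EuclideanSpace ℝ (Fin n))
    (hf : f = fun x => (WithLp.equiv 2 (Fin n → ℝ)).symm fun i =>
      if i = (⟨0, by omega⟩ : Fin n) then (k : ℝ) * x ⟨0, by omega⟩
      else if i = (⟨1, by omega⟩ : Fin n) then x ⟨1, by omega⟩ / k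
      else if i = (⟨n - 1, by omega⟩ : Fin n) then ‖x‖ ^ 2 / 3 + x ⟨n - 1, by omega⟩
      else x i) :
    (∀ x ∈ ball (0 : EuclideanSpace ℝ (Fin n)) 1,
      lap f x = EuclideanSpace.single (⟨n - 1, by omega⟩ : Fin n) (2 * (n : ℝ) / 3)) ∧
    f 0 = 0 ∧
    LinearMap.det (fderiv ℝ f 0 :
      EuclideanSpace ℝ (Fin n) →ₗ[ℝ] EuclideanSpace ℝ (Fin n)) = 1 ∧
    Set.InjOn f (ball 0 1) ∧
    (∀ (c : EuclideanSpace ℝ (Fin n)) (r : ℝ), 1 / (k : ℝ) < r →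
      ¬ ball c r ⊆ f '' ball 0 1) := by
  classical
  have hk0 : (0:ℝ) < k := by exact_mod_cast Nat.lt_of_lt_of_le Nat.zero_lt_one hk
  set i0 : Fin n := ⟨0, by omega⟩ with hi0
  set i1 : Fin n := ⟨1, by omega⟩ with hi1
  set m : Fin n := ⟨n - 1, by omega⟩ with hm
  have h01 : i0 ≠ i1 := by simp [hi0, hi1, Fin.ext_iff]
  have h0m : i0 ≠ m := by simp [hi0, hm, Fin.ext_iff]; omega
  have h1m : i1 ≠ m := by simp [hi1, hm, Fin.ext_iff]; omega
  set d : Fin n → ℝ := fun i => if i = i0 then (k:ℝ) else if i = i1 then (k:ℝ)⁻¹ else 1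
    with hd
  set u : EuclideanSpace ℝ (Fin n) := EuclideanSpace.single m 1 with hu
  have hfd : f = fun x => diagCLM d x + ((3:ℝ)⁻¹ * ‖x‖ ^ 2) • u := by
    rw [hf]; funext x; ext i
    simp only [WithLp.equiv_symm_apply, PiLp.toLp_apply, PiLp.add_apply, PiLp.smul_apply, diagCLM_apply,
      smul_eq_mul, hu, EuclideanSpace.single_apply, hd]
    by_cases e0 : i = i0
    · subst e0
      simp only [if_pos rfl, if_neg h01, if_neg h0m, if_neg (Ne.symm h01), if_true]
      ring
    · by_cases e1 : i = i1
      · subst e1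
        simp only [if_pos rfl, if_neg (Ne.symm h01), if_neg h1m, if_true]
        rw [div_eq_mul_inv]
        ring
      · by_cases em : i = m
        · subst em
          simp only [if_neg e0, if_neg e1]
          simp only [if_pos rfl, if_neg (Ne.symm h0m), if_neg (Ne.symm h1m), hm,
            if_pos rfl, if_true]
          ring
        · rw [if_neg e0, if_neg e1, if_neg e1, if_neg em, if_neg e0]
          rw [hm] at em
          rw [if_neg em]
          ring
  have fapp : ∀ (x : EuclideanSpace ℝ (Fin n)) (i : Fin n),
      f x i = d i * x i + ((3:ℝ)⁻¹ * ‖x‖ ^ 2) * (if i = m then 1 else 0) := by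
    rw [hfd]
    intro x i
    simp only [PiLp.add_apply, PiLp.smul_apply, diagCLM_apply, smul_eq_mul, hu,
      EuclideanSpace.single_apply]
  refine ⟨?_, ?_, ?_, ?_, ?_⟩
  · -- Laplacian
    intro x _
    rw [hfd, lap_quad]
    ext j
    simp [hu, EuclideanSpace.single_apply]
    split <;> ring
  · -- f 0 = 0
    rw [hfd]; simp
  · -- Jacobian
    have hf0 : fderiv ℝ f 0 = diagCLM d := by
      have h := (by rw [hfd]; exact hasFDerivAt_quad (diagCLM d) u (3:ℝ)⁻¹ 0 :
        HasFDerivAt f (diagCLM d + (((3:ℝ)⁻¹) • (2 • innerSL ℝ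
          (0 : EuclideanSpace ℝ (Fin n)))).smulRight u) 0).fderiv
      have hz : (((3:ℝ)⁻¹) • (2 • innerSL ℝ
          (0 : EuclideanSpace ℝ (Fin n)))).smulRight u = 0 := by
        have h0 : innerSL ℝ (0 : EuclideanSpace ℝ (Fin n)) = 0 := map_zero _
        ext v
        rw [ContinuousLinearMap.smulRight_apply, ContinuousLinearMap.smul_apply,
          ContinuousLinearMap.smul_apply, h0, ContinuousLinearMap.zero_apply,
          smul_zero, smul_zero, zero_smul, ContinuousLinearMap.zero_apply]
      rw [h, hz, add_zero]
    rw [hf0, diagCLM_det]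
    have hsplit : (∏ i, d i) = (∏ i ∈ ({i0, i1} : Finset (Fin n)), d i) *
        ∏ i ∈ ({i0, i1} : Finset (Fin n))ᶜ, d i :=
      (Finset.prod_mul_prod_compl _ _).symm
    rw [hsplit, Finset.prod_pair h01]
    have h1 : ∏ i ∈ ({i0, i1} : Finset (Fin n))ᶜ, d i = 1 := by
      apply Finset.prod_eq_one
      intro i hi
      simp only [Finset.mem_compl, Finset.mem_insert, Finset.mem_singleton, not_or] at hi
      simp [hd, hi.1, hi.2]
    rw [h1, hd]
    simp only [if_pos rfl, if_neg (Ne.symm h01), if_true, mul_one]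
    exact mul_inv_cancel₀ (ne_of_gt hk0)
  · -- injectivity
    intro x hx y hy hxy
    have hxn : ‖x‖ < 1 := by simpa [mem_ball_zero_iff] using hx
    have hyn : ‖y‖ < 1 := by simpa [mem_ball_zero_iff] using hy
    have hco : ∀ i, f x i = f y i := fun i => by rw [hxy]
    have hne : ∀ i, i ≠ m → x i = y i := by
      intro i him
      have h := hco i
      rw [fapp, fapp] at h
      simp only [him, if_false, mul_zero, add_zero] at h
      have hdi : d i ≠ 0 := by
        rw [hd]
        dsimp only
        split_ifs <;> positivity
      exact mul_left_cancel₀ hdi h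
    have hS : ∑ i ∈ Finset.univ.erase m, x i ^ 2 = ∑ i ∈ Finset.univ.erase m, y i ^ 2 := by
      apply Finset.sum_congr rfl
      intro i hi
      rw [hne i (Finset.mem_erase.mp hi).1]
    have hxs : ‖x‖ ^ 2 = x m ^ 2 + ∑ i ∈ Finset.univ.erase m, x i ^ 2 := by
      rw [norm_sq_eq_sum]
      exact (Finset.add_sum_erase _ (fun i => x i ^ 2) (Finset.mem_univ m)).symm
    have hys : ‖y‖ ^ 2 = y m ^ 2 + ∑ i ∈ Finset.univ.erase m, y i ^ 2 := by
      rw [norm_sq_eq_sum]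
      exact (Finset.add_sum_erase _ (fun i => y i ^ 2) (Finset.mem_univ m)).symm
    have hmm : x m = y m := by
      have h := hco m
      rw [fapp, fapp] at h
      simp only [if_pos rfl, if_true, mul_one] at h
      have hdm : d m = 1 := by
        rw [hd]
        dsimp only
        rw [if_neg (Ne.symm h0m), if_neg (Ne.symm h1m)]
      rw [hdm, hxs, hys, hS] at h
      have hax : |x m| < 1 := lt_of_le_of_lt (abs_coord_le_norm x m) hxn
      have hay : |y m| < 1 := lt_of_le_of_lt (abs_coord_le_norm y m) hyn
      rw [abs_lt] at hax hay
      have hz : (x m - y m) * (3 + x m + y m) = 0 := by linear_combination 3 * h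
      rcases mul_eq_zero.mp hz with h' | h'
      · exact sub_eq_zero.mp h'
      · exfalso
        linarith [hax.1, hay.1]
    ext i
    by_cases him : i = m
    · rw [him]; exact hmm
    · exact hne i him
  · -- no large balls in the image
    intro c r hr hsub
    have hrk : 0 < 1 / (k:ℝ) := by positivity
    set s : ℝ := if 0 ≤ c i1 then (r + 1/k)/2 else -((r + 1/k)/2) with hs
    have hspos : 0 < (r + 1/k)/2 := by linarith
    have habs : |s| = (r + 1/k)/2 := by
      rw [hs]
      split_ifs
      · exact abs_of_pos hspos
      · rw [abs_neg]
        exact abs_of_pos hspos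
    set y : EuclideanSpace ℝ (Fin n) := c + s • EuclideanSpace.single i1 1 with hy
    have hymem : y ∈ ball c r := by
      rw [mem_ball, dist_eq_norm, hy]
      simp only [add_sub_cancel_left, norm_smul, EuclideanSpace.norm_single, norm_one,
        mul_one, Real.norm_eq_abs, habs]
      linarith
    obtain ⟨x, hxball, hxy⟩ := hsub hymem
    have hxn : ‖x‖ < 1 := by simpa [mem_ball_zero_iff] using hxball
    have hyi1 : y i1 = c i1 + s := by
      rw [hy]
      simp [EuclideanSpace.single_apply]
    have hfx : f x i1 = (k:ℝ)⁻¹ * x i1 := by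
      rw [fapp]
      simp [hd, h01.symm, h1m, mul_comm]
    have hsmall : |y i1| < 1 / k := by
      rw [← hxy, hfx, abs_mul, abs_inv, Nat.abs_cast, one_div]
      have : |x i1| < 1 := lt_of_le_of_lt (abs_coord_le_norm x i1) hxn
      calc (k:ℝ)⁻¹ * |x i1| < (k:ℝ)⁻¹ * 1 := by
            apply mul_lt_mul_of_pos_left this (by positivity)
        _ = (k:ℝ)⁻¹ := mul_one _
    have hbig : 1 / (k:ℝ) < |y i1| := by
      rw [hyi1, hs]
      split_ifs with hc
      · rw [abs_of_pos (by linarith)]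
        linarith
      · push_neg at hc
        rw [abs_of_neg (by linarith)]
        linarith
    linarith
end
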